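/- If p(x_{t-Δt}|x_t,x_0) = p(x_{t-Δt}|x_0) (conditional independence, γ_t = 0), then E[x_{t-Δt}|x_t] = (μ_{t-Δt}/μ_t)(x_t + σ_t² ∇ log p_t(x_t)), i.e., the reverse mean is μ_{t-Δt} times the Tweedie denoised estimate E[x_0|x_t]. -/

import Mathlib

open MeasureTheory Real

/-- Isotropic Gaussian density on `ℝ^N` with standard deviation `σ`. -/
noncomputable def gaussPdf (N : ℕ) (σ : ℝ) (z : EuclideanSpace ℝ (Fin N)) : ℝ :=
  (2 * π * σ ^ 2) ^ (-(N : ℝ) / 2) * Real.exp (-‖z‖ ^ 2 / (2 * σ ^ 2))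

lemma aux_r_exp_le {σ : ℝ} (hσ : 0 < σ) {r : ℝ} (hr : 0 ≤ r) :
    r * Real.exp (-r ^ 2 / (2 * σ ^ 2)) ≤ Real.sqrt 2 * σ := by
  have h2 : (0:ℝ) < Real.sqrt 2 * σ := by positivity
  by_cases hrs : r ≤ Real.sqrt 2 * σ
  · calc r * Real.exp (-r ^ 2 / (2 * σ ^ 2)) ≤ r * 1 := by
          apply mul_le_mul_of_nonneg_left _ hr
          rw [Real.exp_le_one_iff]
          have : (0:ℝ) ≤ r ^ 2 / (2 * σ ^ 2) := by positivity
          linarith [this, neg_div (2*σ^2) (r^2)]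
      _ ≤ Real.sqrt 2 * σ := by rwa [mul_one]
  · push_neg at hrs
    have hrpos : 0 < r := h2.trans hrs
    have ha : (0:ℝ) < r ^ 2 / (2 * σ ^ 2) := by positivity
    have hexp : Real.exp (-r ^ 2 / (2 * σ ^ 2)) ≤ (r ^ 2 / (2 * σ ^ 2))⁻¹ := by
      rw [neg_div, Real.exp_neg]
      apply inv_anti₀ ha
      linarith [Real.add_one_le_exp (r ^ 2 / (2 * σ ^ 2))]
    have hss : Real.sqrt 2 * Real.sqrt 2 = 2 := Real.mul_self_sqrt (by norm_num)
    calc r * Real.exp (-r ^ 2 / (2 * σ ^ 2)) ≤ r * (r ^ 2 / (2 * σ ^ 2))⁻¹ :=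
          mul_le_mul_of_nonneg_left hexp hr
      _ = 2 * σ ^ 2 / r := by field_simp
      _ ≤ 2 * σ ^ 2 / (Real.sqrt 2 * σ) := by
          apply div_le_div_of_nonneg_left (by positivity) h2 hrs.le
      _ = Real.sqrt 2 * σ := by
          rw [eq_comm, eq_div_iff h2.ne']; nlinarith [hss]

lemma gauss_mul_norm_le (N : ℕ) {σ : ℝ} (hσ : 0 < σ) (z : EuclideanSpace ℝ (Fin N)) :
    gaussPdf N σ z * ‖z‖ ≤ (2 * π * σ ^ 2) ^ (-(N : ℝ) / 2) * (Real.sqrt 2 * σ) := by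
  have h := aux_r_exp_le hσ (norm_nonneg z)
  have hc0 : (0:ℝ) < (2 * π * σ ^ 2) ^ (-(N : ℝ) / 2) :=
    Real.rpow_pos_of_pos (by positivity) _
  calc gaussPdf N σ z * ‖z‖
      = (2 * π * σ ^ 2) ^ (-(N : ℝ) / 2) * (‖z‖ * Real.exp (-‖z‖ ^ 2 / (2 * σ ^ 2))) := by
        unfold gaussPdf; ring
    _ ≤ (2 * π * σ ^ 2) ^ (-(N : ℝ) / 2) * (Real.sqrt 2 * σ) :=
        mul_le_mul_of_nonneg_left h hc0.le

lemma gauss_nonneg (N : ℕ) (σ : ℝ) (z : EuclideanSpace ℝ (Fin N)) : 0 ≤ gaussPdf N σ z := by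
  unfold gaussPdf; positivity

lemma gauss_continuous (N : ℕ) (σ : ℝ) : Continuous (gaussPdf N σ) := by
  unfold gaussPdf
  exact continuous_const.mul (((continuous_norm.pow 2).neg.div_const _).rexp)

lemma aux_hasFDerivAt (N : ℕ) (σ : ℝ) (c : ℝ) (b : EuclideanSpace ℝ (Fin N))
    (x' : EuclideanSpace ℝ (Fin N)) :
    HasFDerivAt (fun x : EuclideanSpace ℝ (Fin N) => c * gaussPdf N σ (x - b))
      ((c * gaussPdf N σ (x' - b) * (-(σ ^ 2)⁻¹)) • innerSL ℝ (x' - b)) x' := by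
  have h1 : HasFDerivAt (fun x : EuclideanSpace ℝ (Fin N) => x - b)
      (ContinuousLinearMap.id ℝ _) x' := (hasFDerivAt_id x').sub_const b
  have h2 := h1.norm_sq
  have h3 := h2.const_mul (-(2 * σ ^ 2)⁻¹)
  have heq : (fun x : EuclideanSpace ℝ (Fin N) => -‖x - b‖ ^ 2 / (2 * σ ^ 2))
      = fun x => -(2 * σ ^ 2)⁻¹ * ‖x - b‖ ^ 2 := by funext z; ring
  rw [← heq] at h3
  have h4 := h3.exp
  have h5 := h4.const_mul (c * (2 * π * σ ^ 2) ^ (-(N : ℝ) / 2))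
  have heq2 : (fun x : EuclideanSpace ℝ (Fin N) =>
      c * (2 * π * σ ^ 2) ^ (-(N : ℝ) / 2) * Real.exp (-‖x - b‖ ^ 2 / (2 * σ ^ 2)))
      = fun x => c * gaussPdf N σ (x - b) := by
    funext z; simp [gaussPdf]; ring
  rw [heq2] at h5
  convert h5 using 1
  rotate_right
  ext v
  simp [gaussPdf, ContinuousLinearMap.smul_apply]
  ring
  all_goals rfl

/-- StoMax (`γ_t = 0`): if the reverse kernel is
`p(x_{t-Δt} | x_t, x_0) = p(x_{t-Δt} | x_0) = N(μ_{t-Δt} x_0, σ_{t-Δt}² I)`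
(conditional independence), then
`E[x_{t-Δt} | x_t = x] = (μ_{t-Δt}/μ_t)(x + σ_t² ∇ log p_t(x))`,
i.e. `μ_{t-Δt}` times the Tweedie denoised estimate `E[x_0 | x_t = x]`. -/
theorem stomax_conditional_expectation
    (N : ℕ) (μt μs σt σs : ℝ)
    (hμt : 0 < μt) (hμs : 0 < μs) (hσt : 0 < σt) (hσs : 0 < σs)
    (f : EuclideanSpace ℝ (Fin N) → ℝ)
    (hf_meas : Measurable f) (hf_nonneg : ∀ y, 0 ≤ f y)
    (hf_prob : ∫ y, f y = 1)
    (p : EuclideanSpace ℝ (Fin N) → ℝ)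
    (hp : ∀ x, p x = ∫ y, f y * gaussPdf N σt (x - μt • y))
    (x : EuclideanSpace ℝ (Fin N))
    (hpos : 0 < p x)
    (hint1 : Integrable (fun y => f y * gaussPdf N σt (x - μt • y)))
    (hint2 : Integrable (fun y => (f y * gaussPdf N σt (x - μt • y)) • y))
    (hdiff : DifferentiableAt ℝ p x) :
    (p x)⁻¹ • ∫ y, (f y * gaussPdf N σt (x - μt • y)) • (μs • y)
      = (μs / μt) • (x + σt ^ 2 • gradient (fun z => Real.log (p z)) x) := by
  classical
  have hf_int : Integrable f := integrable_of_integral_eq_one hf_prob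
  set c0 : ℝ := (2 * π * σt ^ 2) ^ (-(N : ℝ) / 2) with hc0_def
  have hc0 : 0 < c0 := Real.rpow_pos_of_pos (by positivity) _
  set K : ℝ := c0 * (Real.sqrt 2 * σt) * (σt ^ 2)⁻¹ with hK_def
  set F' : EuclideanSpace ℝ (Fin N) → EuclideanSpace ℝ (Fin N) → (EuclideanSpace ℝ (Fin N) →L[ℝ] ℝ) := fun x' y =>
    (f y * gaussPdf N σt (x' - μt • y) * (-(σt ^ 2)⁻¹)) • innerSL ℝ (x' - μt • y) with hF'_def
  -- the pointwise norm bound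
  have h_bound : ∀ (x' y : EuclideanSpace ℝ (Fin N)), ‖F' x' y‖ ≤ f y * K := by
    intro x' y
    have hv := gauss_mul_norm_le N hσt (x' - μt • y)
    have hkey : ‖F' x' y‖ = |f y * gaussPdf N σt (x' - μt • y) * (-(σt ^ 2)⁻¹)| * ‖x' - μt • y‖ := by
      simp only [hF'_def]
      rw [← innerSL_apply_norm (𝕜 := ℝ) (x' - μt • y), ← Real.norm_eq_abs]
      exact norm_smul (f y * gaussPdf N σt (x' - μt • y) * (-(σt ^ 2)⁻¹))
        ((innerSL ℝ) (x' - μt • y))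
    rw [hkey, abs_mul, abs_mul, abs_neg, abs_inv, abs_of_nonneg (hf_nonneg y),
      abs_of_nonneg (gauss_nonneg N σt _), abs_of_nonneg (sq_nonneg σt)]
    calc f y * gaussPdf N σt (x' - μt • y) * (σt ^ 2)⁻¹ * ‖x' - μt • y‖
        = (f y * (σt ^ 2)⁻¹) * (gaussPdf N σt (x' - μt • y) * ‖x' - μt • y‖) := by ring
      _ ≤ (f y * (σt ^ 2)⁻¹) * (c0 * (Real.sqrt 2 * σt)) := by
          apply mul_le_mul_of_nonneg_left hv
          exact mul_nonneg (hf_nonneg y) (by positivity)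
      _ = f y * K := by rw [hK_def]; ring
  have hy_cont : ∀ x' : EuclideanSpace ℝ (Fin N), Continuous fun y : EuclideanSpace ℝ (Fin N) => x' - μt • y :=
    fun x' => continuous_const.sub (continuous_id.const_smul μt)
  have hgm : ∀ x' : EuclideanSpace ℝ (Fin N),
      Measurable fun y : EuclideanSpace ℝ (Fin N) => gaussPdf N σt (x' - μt • y) :=
    fun x' => ((gauss_continuous N σt).comp (hy_cont x')).measurable
  have hF'_meas : AEStronglyMeasurable (F' x) volume := by
    have hsc : Measurable fun y : EuclideanSpace ℝ (Fin N) => f y * gaussPdf N σt (x - μt • y) * (-(σt ^ 2)⁻¹) :=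
      (hf_meas.mul (hgm x)).mul_const _
    have hL : Continuous fun y : EuclideanSpace ℝ (Fin N) => innerSL ℝ (x - μt • y) :=
      (innerSL ℝ (E := EuclideanSpace ℝ (Fin N))).continuous.comp (hy_cont x)
    exact hsc.aestronglyMeasurable.smul hL.aestronglyMeasurable
  have bound_int : Integrable fun y : EuclideanSpace ℝ (Fin N) => f y * K := hf_int.mul_const K
  -- differentiation under the integral sign
  have hFD : HasFDerivAt (fun x' : EuclideanSpace ℝ (Fin N) => ∫ y, f y * gaussPdf N σt (x' - μt • y))
      (∫ y, F' x y) x := by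
    apply hasFDerivAt_integral_of_dominated_of_fderiv_le (s := Metric.ball x 1) (Metric.ball_mem_nhds x one_pos)
    · exact Filter.Eventually.of_forall fun x' =>
        (hf_meas.mul (hgm x')).aestronglyMeasurable
    · exact hint1
    · exact hF'_meas
    · exact Filter.Eventually.of_forall fun y => fun x' _ => h_bound x' y
    · exact bound_int
    · exact Filter.Eventually.of_forall fun y => fun x' _ =>
        aux_hasFDerivAt N σt (f y) (μt • y) x'
  have hp_fun : p = fun x' : EuclideanSpace ℝ (Fin N) => ∫ y, f y * gaussPdf N σt (x' - μt • y) := funext hp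
  rw [← hp_fun] at hFD
  -- integrability facts
  have hF'_int : Integrable (F' x) :=
    Integrable.mono' bound_int hF'_meas
      (Filter.Eventually.of_forall fun y => by
        simpa [Real.norm_eq_abs] using h_bound x y)
  have h1 : Integrable fun y : EuclideanSpace ℝ (Fin N) => (f y * gaussPdf N σt (x - μt • y) * (-(σt ^ 2)⁻¹)) • x :=
    (hint1.mul_const _).smul_const x
  have h2 : Integrable fun y : EuclideanSpace ℝ (Fin N) =>
      ((-(σt ^ 2)⁻¹) * μt) • ((f y * gaussPdf N σt (x - μt • y)) • y) := hint2.smul ((-(σt ^ 2)⁻¹) * μt)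
  have hgvec_eq : (fun y : EuclideanSpace ℝ (Fin N) => (f y * gaussPdf N σt (x - μt • y) * (-(σt ^ 2)⁻¹)) • (x - μt • y))
      = fun y : EuclideanSpace ℝ (Fin N) => (f y * gaussPdf N σt (x - μt • y) * (-(σt ^ 2)⁻¹)) • x
        - ((-(σt ^ 2)⁻¹) * μt) • ((f y * gaussPdf N σt (x - μt • y)) • y) := by
    funext y
    rw [smul_sub]
    congr 1
    rw [smul_smul, smul_smul]
    congr 1
    ring
  have hgvec_int : Integrable
      (fun y : EuclideanSpace ℝ (Fin N) => (f y * gaussPdf N σt (x - μt • y) * (-(σt ^ 2)⁻¹)) • (x - μt • y)) := by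
    rw [hgvec_eq]; exact h1.sub h2
  -- identify the Fréchet derivative with the gradient vector
  set G : EuclideanSpace ℝ (Fin N) := ∫ y, (f y * gaussPdf N σt (x - μt • y) * (-(σt ^ 2)⁻¹)) • (x - μt • y) with hG_def
  have hFeq : (∫ y, F' x y) = (InnerProductSpace.toDual ℝ (EuclideanSpace ℝ (Fin N))) G := by
    apply ContinuousLinearMap.ext
    intro w
    rw [ContinuousLinearMap.integral_apply hF'_int, InnerProductSpace.toDual_apply_apply, hG_def,
      real_inner_comm, ← integral_inner hgvec_int w]
    congr 1
    funext y
    rw [hF'_def]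
    simp only [ContinuousLinearMap.smul_apply, innerSL_apply_apply, smul_eq_mul,
      real_inner_smul_right]
    rw [real_inner_comm]
  have hGrad : HasGradientAt p G x := by
    rw [hasGradientAt_iff_hasFDerivAt, ← hFeq]
    exact hFD
  have hlog : HasGradientAt (fun z => Real.log (p z)) ((p x)⁻¹ • G) x := by
    rw [hasGradientAt_iff_hasFDerivAt]
    have hl := (hGrad.hasFDerivAt).log hpos.ne'
    have : (InnerProductSpace.toDual ℝ (EuclideanSpace ℝ (Fin N))) ((p x)⁻¹ • G)
        = (p x)⁻¹ • (InnerProductSpace.toDual ℝ (EuclideanSpace ℝ (Fin N))) G := by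
      apply ContinuousLinearMap.ext
      intro w
      simp [InnerProductSpace.toDual_apply_apply, real_inner_smul_left]
    rw [this]
    exact hl
  have hgradlog : gradient (fun z => Real.log (p z)) x = (p x)⁻¹ • G := hlog.gradient
  -- compute G
  have hsplit : G = ((p x) * (-(σt ^ 2)⁻¹)) • x
      - ((-(σt ^ 2)⁻¹) * μt) • (∫ y, (f y * gaussPdf N σt (x - μt • y)) • y) := by
    rw [hG_def, hgvec_eq, integral_sub h1 h2, integral_smul, integral_smul_const,
      integral_mul_const, ← hp x]
  -- final algebra
  have hLHS : (fun y : EuclideanSpace ℝ (Fin N) => (f y * gaussPdf N σt (x - μt • y)) • (μs • y))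
      = fun y : EuclideanSpace ℝ (Fin N) => μs • ((f y * gaussPdf N σt (x - μt • y)) • y) :=
    funext fun y => smul_comm _ _ _
  rw [hLHS, integral_smul, hgradlog, hsplit]
  match_scalars <;> field_simp <;> ring
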